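/- The monotone rearrangement operator is a contraction in L^p: for bounded measurable functions f₁, f₂ on a bounded interval J and any p ≥ 1, ∫_J |Φ(f₁)(u) − Φ(f₂)(u)|^p du ≤ ∫_J |f₁(u) − f₂(u)|^p du. -/

import Mathlib

open MeasureTheory Set ENNReal

/-- `Ψ(f)(y) = ∫_{[a,b]} 1{f(u) ≤ y} du`. -/
noncomputable def Psi (a b : ℝ) (f : ℝ → ℝ) (y : ℝ) : ℝ :=
  ∫ u in Set.Icc a b, Set.indicator {v : ℝ | f v ≤ y} (fun _ => (1 : ℝ)) u

/-- The increasing rearrangement `Φ(f)(u) = (Ψ f)⁻¹(u) = sup {y : Ψ(f)(y) ≤ u - a}`. -/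
noncomputable def Phi (a b : ℝ) (f : ℝ → ℝ) (u : ℝ) : ℝ :=
  sSup {y : ℝ | Psi a b f y ≤ u - a}

lemma psi_eq (a b : ℝ) (f : ℝ → ℝ) (hf : Measurable f) (y : ℝ) :
    Psi a b f y = (volume (Icc a b ∩ {v | f v ≤ y})).toReal := by
  unfold Psi
  rw [setIntegral_indicator (measurableSet_le hf measurable_const),
    setIntegral_const, smul_eq_mul, mul_one, measureReal_def]

lemma vol_fin (a b : ℝ) (A : Set ℝ) : volume (Icc a b ∩ A) ≠ ⊤ :=
  ne_top_of_le_ne_top measure_Icc_lt_top.ne (measure_mono inter_subset_left)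

lemma psi_nonneg (a b : ℝ) (f : ℝ → ℝ) (y : ℝ) (hf : Measurable f) : 0 ≤ Psi a b f y := by
  rw [psi_eq a b f hf]; exact ENNReal.toReal_nonneg

lemma psi_mono (a b : ℝ) (f : ℝ → ℝ) (hf : Measurable f) {y z : ℝ} (h : y ≤ z) :
    Psi a b f y ≤ Psi a b f z := by
  rw [psi_eq a b f hf, psi_eq a b f hf]
  exact ENNReal.toReal_mono (vol_fin a b _)
    (measure_mono (inter_subset_inter_right _ (fun v hv => le_trans hv h)))

lemma vol_ico_inter (a b : ℝ) (A : Set ℝ) : volume (Ico a b ∩ A) = volume (Icc a b ∩ A) := by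
  apply le_antisymm (measure_mono (inter_subset_inter_left _ Ico_subset_Icc_self))
  calc volume (Icc a b ∩ A) ≤ volume ((Ico a b ∩ A) ∪ {b}) := by
        apply measure_mono; rintro x ⟨hx, hxA⟩
        rcases eq_or_lt_of_le hx.2 with h | h
        · exact Or.inr (by simp [h])
        · exact Or.inl ⟨⟨hx.1, h⟩, hxA⟩
    _ ≤ volume (Ico a b ∩ A) + volume ({b} : Set ℝ) := measure_union_le _ _
    _ = volume (Ico a b ∩ A) := by rw [Real.volume_singleton, add_zero]

lemma ofReal_psi (a b : ℝ) (f : ℝ → ℝ) (hf : Measurable f) (y : ℝ) :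
    ENNReal.ofReal (Psi a b f y) = volume (Ico a b ∩ {v | f v ≤ y}) := by
  rw [psi_eq a b f hf, ENNReal.ofReal_toReal (vol_fin a b _), vol_ico_inter]

lemma psi_le (a b : ℝ) (hab : a ≤ b) (f : ℝ → ℝ) (hf : Measurable f) (y : ℝ) :
    Psi a b f y ≤ b - a := by
  rw [psi_eq a b f hf]
  have : volume (Icc a b ∩ {v | f v ≤ y}) ≤ volume (Icc a b) := measure_mono inter_subset_left
  calc (volume (Icc a b ∩ {v | f v ≤ y})).toReal ≤ (volume (Icc a b)).toReal :=
        ENNReal.toReal_mono measure_Icc_lt_top.ne this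
    _ = b - a := by rw [Real.volume_Icc, ENNReal.toReal_ofReal (by linarith)]

lemma psi_eq_top (a b : ℝ) (hab : a ≤ b) (f : ℝ → ℝ) (hf : Measurable f) (C y : ℝ)
    (hbdd : ∀ u ∈ Set.Icc a b, |f u| ≤ C) (hy : C ≤ y) : Psi a b f y = b - a := by
  rw [psi_eq a b f hf]
  have : Icc a b ∩ {v | f v ≤ y} = Icc a b := by
    apply inter_eq_self_of_subset_left
    intro v hv
    exact le_trans (le_trans (le_abs_self _) (hbdd v hv)) hy
  rw [this, Real.volume_Icc, ENNReal.toReal_ofReal (by linarith)]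

lemma psi_eq_bot (a b : ℝ) (f : ℝ → ℝ) (hf : Measurable f) (C : ℝ)
    (hbdd : ∀ u ∈ Set.Icc a b, |f u| ≤ C) : Psi a b f (-C - 1) = 0 := by
  rw [psi_eq a b f hf]
  have : Icc a b ∩ {v | f v ≤ -C - 1} = ∅ := by
    ext v; simp only [mem_inter_iff, mem_setOf_eq, mem_empty_iff_false, iff_false, not_and]
    intro hv hle
    have := (abs_le.mp (hbdd v hv)).1
    linarith
  simp [this]

lemma psi_right (a b : ℝ) (f : ℝ → ℝ) (hf : Measurable f) {s u : ℝ}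
    (h : Psi a b f s < u - a) : ∃ y, s < y ∧ Psi a b f y ≤ u - a := by
  have hmeas : ∀ t : ℝ, MeasurableSet (Icc a b ∩ {v | f v ≤ t}) :=
    fun t => measurableSet_Icc.inter (measurableSet_le hf measurable_const)
  have key : Filter.Tendsto (fun n : ℕ => volume (Icc a b ∩ {v | f v ≤ s + 1 / (n + 1)}))
      Filter.atTop (nhds (volume (⋂ n : ℕ, Icc a b ∩ {v | f v ≤ s + 1 / (n + 1)}))) := by
    apply tendsto_measure_iInter_atTop (fun n => (hmeas _).nullMeasurableSet)
    · intro m n hmn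
      apply inter_subset_inter_right
      intro v hv
      refine le_trans hv (add_le_add_right ?_ s)
      apply one_div_le_one_div_of_le (by positivity)
      exact_mod_cast add_le_add_left hmn 1
    · exact ⟨0, vol_fin a b _⟩
  have hinter : (⋂ n : ℕ, Icc a b ∩ {v | f v ≤ s + 1 / (n + 1)}) = Icc a b ∩ {v | f v ≤ s} := by
    ext v
    simp only [mem_iInter, mem_inter_iff, mem_setOf_eq]
    constructor
    · intro h
      refine ⟨(h 0).1, ?_⟩
      by_contra hc
      push_neg at hc
      obtain ⟨n, hn⟩ := exists_nat_one_div_lt (show 0 < f v - s by linarith)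
      have := (h n).2
      linarith
    · intro h n
      exact ⟨h.1, le_trans h.2 (le_add_of_nonneg_right (by positivity))⟩
  rw [hinter] at key
  have hlt : volume (Icc a b ∩ {v | f v ≤ s}) < ENNReal.ofReal (u - a) := by
    have := psi_eq a b f hf s
    rw [← ENNReal.ofReal_toReal (vol_fin a b ({v | f v ≤ s})), ← this]
    exact ENNReal.ofReal_lt_ofReal_iff_of_nonneg (psi_nonneg a b f s hf) |>.mpr h
  have := key.eventually_lt_const hlt
  obtain ⟨n, hn⟩ := this.exists
  refine ⟨s + 1 / (n + 1), lt_add_of_pos_right _ (by positivity), ?_⟩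
  rw [psi_eq a b f hf]
  have : (0:ℝ) ≤ u - a := le_trans (psi_nonneg a b f s hf) h.le
  exact (ENNReal.toReal_le_toReal (vol_fin a b _) ENNReal.ofReal_ne_top).mpr hn.le
    |>.trans_eq (ENNReal.toReal_ofReal this)

section phi
variable {a b : ℝ} {f : ℝ → ℝ} {C : ℝ}

lemma S_mem_bot (hf : Measurable f) (hbdd : ∀ u ∈ Set.Icc a b, |f u| ≤ C) {u : ℝ} (hu : a ≤ u) :
    (-C - 1) ∈ {y : ℝ | Psi a b f y ≤ u - a} := by
  simp only [mem_setOf_eq, psi_eq_bot a b f hf C hbdd]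
  linarith

lemma S_subset_Iio (hab : a < b) (hf : Measurable f) (hbdd : ∀ u ∈ Set.Icc a b, |f u| ≤ C)
    {u : ℝ} (hu : u < b) : {y : ℝ | Psi a b f y ≤ u - a} ⊆ Iio C := by
  intro y hy
  by_contra hc
  simp only [mem_Iio, not_lt] at hc
  have := psi_eq_top a b hab.le f hf C y hbdd hc
  simp only [mem_setOf_eq, this] at hy
  linarith

lemma phi_le (hab : a < b) (hf : Measurable f) (hbdd : ∀ u ∈ Set.Icc a b, |f u| ≤ C)
    {u : ℝ} (hu : u < b) (hau : a ≤ u) : Phi a b f u ≤ C :=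
  csSup_le ⟨_, S_mem_bot hf hbdd hau⟩
    (fun y hy => (S_subset_Iio hab hf hbdd hu hy).le)

lemma phi_ge (hab : a < b) (hf : Measurable f) (hbdd : ∀ u ∈ Set.Icc a b, |f u| ≤ C)
    {u : ℝ} (hu : a ≤ u) (hu' : u < b) : -C - 1 ≤ Phi a b f u :=
  le_csSup ((bddAbove_Iio (a := C)).mono (S_subset_Iio hab hf hbdd hu')) (S_mem_bot hf hbdd hu)

lemma phi_gt_imp (hab : a < b) (hf : Measurable f) (hbdd : ∀ u ∈ Set.Icc a b, |f u| ≤ C)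
    {u s : ℝ} (hu : u ∈ Ico a b) (h : s < Phi a b f u) : Psi a b f s ≤ u - a := by
  obtain ⟨y, hy, hsy⟩ := exists_lt_of_lt_csSup ⟨_, S_mem_bot hf hbdd hu.1⟩ h
  exact le_trans (psi_mono a b f hf hsy.le) hy

lemma psi_lt_imp (hab : a < b) (hf : Measurable f) (hbdd : ∀ u ∈ Set.Icc a b, |f u| ≤ C)
    {u s : ℝ} (hu : u ∈ Ico a b) (h : Psi a b f s < u - a) : s < Phi a b f u := by
  obtain ⟨y, hsy, hy⟩ := psi_right a b f hf h
  exact lt_of_lt_of_le hsy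
    (le_csSup ((bddAbove_Iio (a := C)).mono (S_subset_Iio hab hf hbdd hu.2)) hy)

lemma phi_zero_left {u : ℝ} (hf : Measurable f) (hu : u < a) : Phi a b f u = 0 := by
  unfold Phi
  convert Real.sSup_empty
  ext y
  simp only [mem_setOf_eq, mem_empty_iff_false, iff_false, not_le]
  exact lt_of_lt_of_le (by linarith) (psi_nonneg a b f y hf)

lemma phi_zero_right (hab : a ≤ b) (hf : Measurable f) {u : ℝ} (hu : b ≤ u) :
    Phi a b f u = 0 := by
  unfold Phi
  have : {y : ℝ | Psi a b f y ≤ u - a} = univ := by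
    ext y
    simp only [mem_setOf_eq, mem_univ, iff_true]
    linarith [psi_le a b hab f hf y]
  rw [this]
  apply Real.sSup_of_not_bddAbove
  intro ⟨x, hx⟩
  exact absurd (hx (mem_univ (x + 1))) (by linarith)

lemma phi_mono (hab : a < b) (hf : Measurable f) (hbdd : ∀ u ∈ Set.Icc a b, |f u| ≤ C)
    {u v : ℝ} (hu : a ≤ u) (hv : v < b) (huv : u ≤ v) : Phi a b f u ≤ Phi a b f v := by
  apply csSup_le_csSup ((bddAbove_Iio (a := C)).mono (S_subset_Iio hab hf hbdd hv))
    ⟨_, S_mem_bot hf hbdd hu⟩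
  intro y hy
  simp only [mem_setOf_eq] at hy ⊢
  linarith

end phi

lemma phi_measurable {a b : ℝ} {f : ℝ → ℝ} {C : ℝ} (hab : a < b) (hf : Measurable f)
    (hbdd : ∀ u ∈ Set.Icc a b, |f u| ≤ C) : Measurable (Phi a b f) := by
  apply measurable_of_Ioi
  intro c
  have hoc : OrdConnected (Phi a b f ⁻¹' Ioi c ∩ Ico a b) := by
    constructor
    rintro u₁ ⟨hu₁, hu₁'⟩ u₂ ⟨hu₂, hu₂'⟩ u ⟨h1, h2⟩
    have hum : u ∈ Ico a b := ⟨le_trans hu₁'.1 h1, lt_of_le_of_lt h2 hu₂'.2⟩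
    refine ⟨lt_of_lt_of_le hu₁ (phi_mono hab hf hbdd hu₁'.1 hum.2 h1), hum⟩
  have hzero : ∀ u : ℝ, u ∉ Ico a b → Phi a b f u = 0 := by
    intro u hu
    rcases lt_or_ge u a with h | h
    · exact phi_zero_left hf h
    · have : b ≤ u := by
        by_contra hc
        exact hu ⟨h, lt_of_not_ge hc⟩
      exact phi_zero_right hab.le hf this
  by_cases hc : c < 0
  · have : Phi a b f ⁻¹' Ioi c = (Phi a b f ⁻¹' Ioi c ∩ Ico a b) ∪ (Ico a b)ᶜ := by
      ext u
      simp only [mem_union, mem_inter_iff, mem_preimage, mem_Ioi, mem_compl_iff]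
      constructor
      · intro h
        by_cases hu : u ∈ Ico a b
        · exact Or.inl ⟨h, hu⟩
        · exact Or.inr hu
      · rintro (⟨h, _⟩ | h)
        · exact h
        · rw [hzero u h]; exact hc
    rw [this]
    exact hoc.measurableSet.union measurableSet_Ico.compl
  · have : Phi a b f ⁻¹' Ioi c = Phi a b f ⁻¹' Ioi c ∩ Ico a b := by
      apply (inter_subset_left).antisymm' ∘ subset_inter subset_rfl
      intro u hu
      by_contra hc'
      rw [mem_preimage, mem_Ioi, hzero u hc'] at hu
      exact hc (lt_of_le_of_lt (le_refl c) (by linarith [hu]))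
    rw [this]
    exact hoc.measurableSet

lemma core_lemma {a b : ℝ} {f₁ f₂ : ℝ → ℝ} {C : ℝ} (hab : a < b)
    (hf₁ : Measurable f₁) (hf₂ : Measurable f₂)
    (hbdd₁ : ∀ u ∈ Set.Icc a b, |f₁ u| ≤ C) (hbdd₂ : ∀ u ∈ Set.Icc a b, |f₂ u| ≤ C)
    {s t : ℝ} (hst : s ≤ t) :
    volume {u | u ∈ Ico a b ∧ Phi a b f₂ u ≤ s ∧ t < Phi a b f₁ u}
      ≤ volume {u | u ∈ Ico a b ∧ f₂ u ≤ s ∧ t < f₁ u} := by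
  have upper : volume {u | u ∈ Ico a b ∧ Phi a b f₂ u ≤ s ∧ t < Phi a b f₁ u}
      ≤ ENNReal.ofReal (Psi a b f₂ s - Psi a b f₁ t) := by
    have hsub : {u | u ∈ Ico a b ∧ Phi a b f₂ u ≤ s ∧ t < Phi a b f₁ u}
        ⊆ Icc (a + Psi a b f₁ t) (a + Psi a b f₂ s) := by
      rintro u ⟨hu, h2, h1⟩
      constructor
      · linarith [phi_gt_imp hab hf₁ hbdd₁ hu h1]
      · by_contra hc
        push_neg at hc
        exact absurd (psi_lt_imp hab hf₂ hbdd₂ hu (by linarith)) (not_lt.mpr h2)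
    calc volume _ ≤ volume (Icc (a + Psi a b f₁ t) (a + Psi a b f₂ s)) := measure_mono hsub
      _ = ENNReal.ofReal (Psi a b f₂ s - Psi a b f₁ t) := by rw [Real.volume_Icc]; ring_nf
  have lower : ENNReal.ofReal (Psi a b f₂ s - Psi a b f₁ t)
      ≤ volume {u | u ∈ Ico a b ∧ f₂ u ≤ s ∧ t < f₁ u} := by
    rw [ENNReal.ofReal_sub _ (psi_nonneg a b f₁ t hf₁), ofReal_psi a b f₂ hf₂,
      ofReal_psi a b f₁ hf₁]
    rw [tsub_le_iff_right]
    calc volume (Ico a b ∩ {v | f₂ v ≤ s})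
        ≤ volume ({u | u ∈ Ico a b ∧ f₂ u ≤ s ∧ t < f₁ u} ∪ (Ico a b ∩ {v | f₁ v ≤ t})) := by
          apply measure_mono
          rintro u ⟨hu, h2⟩
          by_cases h1 : f₁ u ≤ t
          · exact Or.inr ⟨hu, h1⟩
          · exact Or.inl ⟨hu, h2, lt_of_not_ge h1⟩
      _ ≤ _ := measure_union_le _ _
  exact upper.trans lower

lemma restrict_Ico_eq_Ioc (c d : ℝ) : volume.restrict (Ico c d) = volume.restrict (Ioc c d) :=
  Measure.restrict_congr_set (Ico_ae_eq_Icc.trans Ioc_ae_eq_Icc.symm)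

lemma lint_aux {B r : ℝ} (hB : 0 ≤ B) (hr : -1 < r) {c d : ℝ} (hcd : c ≤ d) :
    ∫⁻ t in Ico c d, ENNReal.ofReal (B * (t - c) ^ r)
      = ENNReal.ofReal (B / (r + 1) * (d - c) ^ (r + 1)) := by
  rw [restrict_Ico_eq_Ioc]
  have hint : IntegrableOn (fun t => B * (t - c) ^ r) (Ioc c d) volume := by
    rw [← intervalIntegrable_iff_integrableOn_Ioc_of_le hcd]
    exact ((intervalIntegral.intervalIntegrable_rpow' hr (a := c - c) (b := d - c)).comp_sub_right
      c).const_mul B |>.mono_set (by rw [sub_self]; intro x hx; simpa using hx)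
  have hnn : 0 ≤ᵐ[volume.restrict (Ioc c d)] fun t => B * (t - c) ^ r := by
    rw [Filter.EventuallyLE, ae_restrict_iff' measurableSet_Ioc]
    filter_upwards with t ht
    exact mul_nonneg hB (Real.rpow_nonneg (by linarith [ht.1]) r)
  rw [← ofReal_integral_eq_lintegral_ofReal hint hnn]
  congr 1
  rw [← intervalIntegral.integral_of_le hcd, intervalIntegral.integral_const_mul,
    intervalIntegral.integral_comp_sub_right (fun x => x ^ r) c, sub_self,
    integral_rpow (Or.inl hr), Real.zero_rpow (by linarith), sub_zero]
  ring

lemma lint_aux' {B r : ℝ} (hB : 0 ≤ B) (hr : -1 < r) {c d : ℝ} (hcd : c ≤ d) :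
    ∫⁻ t in Ico c d, ENNReal.ofReal (B * (d - t) ^ r)
      = ENNReal.ofReal (B / (r + 1) * (d - c) ^ (r + 1)) := by
  rw [restrict_Ico_eq_Ioc]
  have hint : IntegrableOn (fun t => B * (d - t) ^ r) (Ioc c d) volume := by
    rw [← intervalIntegrable_iff_integrableOn_Ioc_of_le hcd]
    exact ((intervalIntegral.intervalIntegrable_rpow' hr (a := d - c) (b := d - d)).comp_sub_left
      d).const_mul B |>.mono_set (by rw [sub_self]; intro x hx; simpa using hx)
  have hnn : 0 ≤ᵐ[volume.restrict (Ioc c d)] fun t => B * (d - t) ^ r := by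
    rw [Filter.EventuallyLE, ae_restrict_iff' measurableSet_Ioc]
    filter_upwards with t ht
    exact mul_nonneg hB (Real.rpow_nonneg (by linarith [ht.2]) r)
  rw [← ofReal_integral_eq_lintegral_ofReal hint hnn]
  congr 1
  rw [← intervalIntegral.integral_of_le hcd, intervalIntegral.integral_const_mul,
    intervalIntegral.integral_comp_sub_left (fun x => x ^ r) d, sub_self,
    integral_rpow (Or.inl hr), Real.zero_rpow (by linarith), sub_zero]
  ring

noncomputable def Vk (p s x y : ℝ) : ℝ≥0∞ :=
  if y ≤ s ∧ s < x then ENNReal.ofReal (p * (x - s) ^ (p - 1)) else 0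

noncomputable def Wk (p s t x y : ℝ) : ℝ≥0∞ :=
  if y ≤ s ∧ s ≤ t ∧ t < x then ENNReal.ofReal (p * (p - 1) * (t - s) ^ (p - 2)) else 0

lemma Vk_meas {g₁ g₂ : ℝ → ℝ} (h₁ : Measurable g₁) (h₂ : Measurable g₂) (p : ℝ) :
    Measurable (Function.uncurry fun u s => Vk p s (g₁ u) (g₂ u)) := by
  have hA : MeasurableSet {z : ℝ × ℝ | g₂ z.1 ≤ z.2 ∧ z.2 < g₁ z.1} := by
    rw [Set.setOf_and]
    exact (measurableSet_le (h₂.comp measurable_fst) measurable_snd).inter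
      (measurableSet_lt measurable_snd (h₁.comp measurable_fst))
  exact Measurable.ite hA
    (Measurable.ennreal_ofReal (measurable_const.mul
      (((h₁.comp measurable_fst).sub measurable_snd).pow measurable_const)))
    measurable_const

lemma Wk_meas {g₁ g₂ : ℝ → ℝ} (h₁ : Measurable g₁) (h₂ : Measurable g₂) (p s : ℝ) :
    Measurable (Function.uncurry fun u t => Wk p s t (g₁ u) (g₂ u)) := by
  have hA : MeasurableSet {z : ℝ × ℝ | g₂ z.1 ≤ s ∧ s ≤ z.2 ∧ z.2 < g₁ z.1} := by
    rw [Set.setOf_and, Set.setOf_and]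
    exact (measurableSet_le (h₂.comp measurable_fst) measurable_const).inter
      ((measurableSet_le measurable_const measurable_snd).inter
        (measurableSet_lt measurable_snd (h₁.comp measurable_fst)))
  exact Measurable.ite hA
    (Measurable.ennreal_ofReal (measurable_const.mul
      ((measurable_snd.sub measurable_const).pow measurable_const)))
    measurable_const

lemma Vk_meas_single {g₁ g₂ : ℝ → ℝ} (h₁ : Measurable g₁) (h₂ : Measurable g₂) (p s : ℝ) :
    Measurable (fun u => Vk p s (g₁ u) (g₂ u)) := by
  have := (Vk_meas h₁ h₂ p).comp (measurable_id.prodMk (measurable_const (a := s)))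
  exact this

lemma Vk_zero (p : ℝ) {x y : ℝ} (h : x ≤ y) (s : ℝ) : Vk p s x y = 0 := by
  unfold Vk
  rw [if_neg]
  rintro ⟨h1, h2⟩
  linarith

lemma Vk_int (p : ℝ) (hp : 1 ≤ p) {x y : ℝ} (h : y ≤ x) :
    (∫⁻ s, Vk p s x y) = ENNReal.ofReal ((x - y) ^ p) := by
  have heq : (fun s => Vk p s x y)
      = fun s => (Ico y x).indicator (fun s' => ENNReal.ofReal (p * (x - s') ^ (p - 1))) s := by
    funext s
    simp [Vk, Set.indicator_apply, mem_Ico]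
  rw [heq, lintegral_indicator measurableSet_Ico _,
    lint_aux' (by linarith) (by linarith) h]
  have hq : p - 1 + 1 = p := by ring
  rw [hq, div_self (by linarith : p ≠ 0), one_mul]

lemma Vk_identity (p : ℝ) (hp : 1 ≤ p) (x y : ℝ) :
    (∫⁻ s, (Vk p s x y + Vk p s y x)) = ENNReal.ofReal (|x - y| ^ p) := by
  rcases le_or_gt x y with hxy | hxy
  · have h0 : ∀ s, Vk p s x y = 0 := Vk_zero p hxy
    calc (∫⁻ s, (Vk p s x y + Vk p s y x)) = ∫⁻ s, Vk p s y x :=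
          lintegral_congr fun s => by rw [h0 s, zero_add]
      _ = ENNReal.ofReal ((y - x) ^ p) := Vk_int p hp hxy
      _ = ENNReal.ofReal (|x - y| ^ p) := by
          rw [abs_sub_comm, abs_of_nonneg (sub_nonneg.mpr hxy)]
  · have h0 : ∀ s, Vk p s y x = 0 := fun s => Vk_zero p hxy.le s
    calc (∫⁻ s, (Vk p s x y + Vk p s y x)) = ∫⁻ s, Vk p s x y :=
          lintegral_congr fun s => by rw [h0 s, add_zero]
      _ = ENNReal.ofReal ((x - y) ^ p) := Vk_int p hp hxy.le
      _ = ENNReal.ofReal (|x - y| ^ p) := by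
          rw [abs_of_nonneg (sub_nonneg.mpr hxy.le)]

lemma cond_meas {g₁ g₂ : ℝ → ℝ} (h₁ : Measurable g₁) (h₂ : Measurable g₂) (s t : ℝ) :
    MeasurableSet {u : ℝ | g₂ u ≤ s ∧ t < g₁ u} := by
  rw [Set.setOf_and]
  exact (measurableSet_le h₂ measurable_const).inter (measurableSet_lt measurable_const h₁)

lemma lint_ind {g₁ g₂ : ℝ → ℝ} (h₁ : Measurable g₁) (h₂ : Measurable g₂) (a b s t : ℝ) :
    (∫⁻ u in Ico a b, ({u : ℝ | g₂ u ≤ s ∧ t < g₁ u}).indicator 1 u)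
      = volume {u | u ∈ Ico a b ∧ g₂ u ≤ s ∧ t < g₁ u} := by
  rw [lintegral_indicator_one (cond_meas h₁ h₂ s t),
    Measure.restrict_apply (cond_meas h₁ h₂ s t)]
  congr 1
  ext u
  simp only [mem_inter_iff, mem_setOf_eq]
  tauto

lemma Vk_eq_Wk (p : ℝ) (hp : 1 < p) (s x y : ℝ) :
    Vk p s x y = ∫⁻ t, Wk p s t x y := by
  by_cases h1 : y ≤ s
  · by_cases h2 : s < x
    · have heq : (fun t => Wk p s t x y)
          = fun t => (Ico s x).indicator
              (fun t' => ENNReal.ofReal (p * (p - 1) * (t' - s) ^ (p - 2))) t := by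
        funext t
        simp [Wk, indicator_apply, mem_Ico, h1]
      rw [heq, lintegral_indicator measurableSet_Ico _,
        lint_aux (by nlinarith) (by linarith : (-1:ℝ) < p - 2) h2.le]
      unfold Vk
      rw [if_pos ⟨h1, h2⟩]
      congr 1
      have h3 : p - 2 + 1 = p - 1 := by ring
      rw [h3, mul_div_assoc, div_self (by linarith : p - 1 ≠ 0), mul_one]
    · have : ∀ t, Wk p s t x y = 0 := by
        intro t
        unfold Wk
        rw [if_neg]
        rintro ⟨-, ht1, ht2⟩
        exact h2 (lt_of_le_of_lt ht1 ht2)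
      simp only [this, lintegral_zero, Vk]
      rw [if_neg]
      rintro ⟨-, h⟩
      exact h2 h
  · have : ∀ t, Wk p s t x y = 0 := by
      intro t
      unfold Wk
      rw [if_neg]
      rintro ⟨h, -⟩
      exact h1 h
    simp only [this, lintegral_zero, Vk]
    rw [if_neg]
    rintro ⟨h, -⟩
    exact h1 h

lemma step_eq {g₁ g₂ : ℝ → ℝ} (h₁ : Measurable g₁) (h₂ : Measurable g₂) (a b p s t : ℝ) :
    (∫⁻ u in Ico a b, Wk p s t (g₁ u) (g₂ u))
      = if s ≤ t then ENNReal.ofReal (p * (p - 1) * (t - s) ^ (p - 2))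
          * volume {u | u ∈ Ico a b ∧ g₂ u ≤ s ∧ t < g₁ u} else 0 := by
  by_cases hst : s ≤ t
  · rw [if_pos hst]
    have heq : ∀ u, Wk p s t (g₁ u) (g₂ u)
        = ENNReal.ofReal (p * (p - 1) * (t - s) ^ (p - 2))
          * ({u : ℝ | g₂ u ≤ s ∧ t < g₁ u}).indicator 1 u := by
      intro u
      simp only [Set.indicator_apply, mem_setOf_eq, Pi.one_apply]
      unfold Wk
      by_cases h : g₂ u ≤ s ∧ t < g₁ u
      · rw [if_pos h, if_pos ⟨h.1, hst, h.2⟩, mul_one]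
      · rw [if_neg h, mul_zero, if_neg]
        rintro ⟨hc1, -, hc2⟩
        exact h ⟨hc1, hc2⟩
    rw [lintegral_congr heq, lintegral_const_mul _ ((measurable_one).indicator
      (cond_meas h₁ h₂ s t)), lint_ind h₁ h₂ a b s t]
  · rw [if_neg hst]
    have : ∀ u, Wk p s t (g₁ u) (g₂ u) = 0 := by
      intro u
      unfold Wk
      rw [if_neg]
      rintro ⟨-, h, -⟩
      exact hst h
    simp only [this, lintegral_zero]

lemma Hs_lemma {a b : ℝ} {f₁ f₂ : ℝ → ℝ} {C : ℝ} (hab : a < b)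
    (hf₁ : Measurable f₁) (hf₂ : Measurable f₂)
    (hbdd₁ : ∀ u ∈ Set.Icc a b, |f₁ u| ≤ C) (hbdd₂ : ∀ u ∈ Set.Icc a b, |f₂ u| ≤ C)
    (p : ℝ) (hp : 1 ≤ p) (s : ℝ) :
    (∫⁻ u in Ico a b, Vk p s (Phi a b f₁ u) (Phi a b f₂ u))
      ≤ ∫⁻ u in Ico a b, Vk p s (f₁ u) (f₂ u) := by
  have hP₁ : Measurable (Phi a b f₁) := phi_measurable hab hf₁ hbdd₁
  have hP₂ : Measurable (Phi a b f₂) := phi_measurable hab hf₂ hbdd₂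
  rcases eq_or_lt_of_le hp with hp1 | hp1
  · -- p = 1
    have hV : ∀ x y : ℝ, Vk p s x y = ({z : ℝ × ℝ | z.2 ≤ s ∧ s < z.1}).indicator 1 (x, y) := by
      intro x y
      unfold Vk
      simp only [Set.indicator_apply, mem_setOf_eq, Pi.one_apply]
      by_cases h : y ≤ s ∧ s < x
      · rw [if_pos h, if_pos h, ← hp1]
        norm_num
      · rw [if_neg h, if_neg h]
    have key : ∀ g₁ g₂ : ℝ → ℝ, Measurable g₁ → Measurable g₂ →
        (∫⁻ u in Ico a b, Vk p s (g₁ u) (g₂ u))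
          = volume {u | u ∈ Ico a b ∧ g₂ u ≤ s ∧ s < g₁ u} := by
      intro g₁ g₂ h₁ h₂
      rw [← lint_ind h₁ h₂ a b s s]
      apply lintegral_congr
      intro u
      rw [hV]
      simp [Set.indicator_apply, mem_setOf_eq]
    rw [key _ _ hP₁ hP₂, key _ _ hf₁ hf₂]
    exact core_lemma hab hf₁ hf₂ hbdd₁ hbdd₂ le_rfl
  · -- p > 1
    have key : ∀ g₁ g₂ : ℝ → ℝ, Measurable g₁ → Measurable g₂ →
        (∫⁻ u in Ico a b, Vk p s (g₁ u) (g₂ u))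
          = ∫⁻ t, if s ≤ t then ENNReal.ofReal (p * (p - 1) * (t - s) ^ (p - 2))
              * volume {u | u ∈ Ico a b ∧ g₂ u ≤ s ∧ t < g₁ u} else 0 := by
      intro g₁ g₂ h₁ h₂
      calc (∫⁻ u in Ico a b, Vk p s (g₁ u) (g₂ u))
          = ∫⁻ u in Ico a b, ∫⁻ t, Wk p s t (g₁ u) (g₂ u) :=
            lintegral_congr fun u => Vk_eq_Wk p hp1 s _ _
        _ = ∫⁻ t, ∫⁻ u in Ico a b, Wk p s t (g₁ u) (g₂ u) :=
            lintegral_lintegral_swap (Wk_meas h₁ h₂ p s).aemeasurable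
        _ = _ := lintegral_congr fun t => step_eq h₁ h₂ a b p s t
    rw [key _ _ hP₁ hP₂, key _ _ hf₁ hf₂]
    apply lintegral_mono
    intro t
    simp only []
    by_cases hst : s ≤ t
    · rw [if_pos hst, if_pos hst]
      exact mul_le_mul_right (core_lemma hab hf₁ hf₂ hbdd₁ hbdd₂ hst) _
    · rw [if_neg hst]
      exact zero_le

lemma grand_key {g₁ g₂ : ℝ → ℝ} (h₁ : Measurable g₁) (h₂ : Measurable g₂)
    (a b p : ℝ) (hp : 1 ≤ p) :
    (∫⁻ u in Ico a b, ENNReal.ofReal (|g₁ u - g₂ u| ^ p))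
      = ∫⁻ s, ((∫⁻ u in Ico a b, Vk p s (g₁ u) (g₂ u))
          + ∫⁻ u in Ico a b, Vk p s (g₂ u) (g₁ u)) := by
  calc (∫⁻ u in Ico a b, ENNReal.ofReal (|g₁ u - g₂ u| ^ p))
      = ∫⁻ u in Ico a b, ∫⁻ s, (Vk p s (g₁ u) (g₂ u) + Vk p s (g₂ u) (g₁ u)) :=
        lintegral_congr fun u => (Vk_identity p hp (g₁ u) (g₂ u)).symm
    _ = ∫⁻ s, ∫⁻ u in Ico a b, (Vk p s (g₁ u) (g₂ u) + Vk p s (g₂ u) (g₁ u)) :=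
        lintegral_lintegral_swap (((Vk_meas h₁ h₂ p).add (Vk_meas h₂ h₁ p)).aemeasurable)
    _ = _ := lintegral_congr fun s =>
        lintegral_add_left (Vk_meas_single h₁ h₂ p s) _

lemma grand_ineq {a b : ℝ} {f₁ f₂ : ℝ → ℝ} {C : ℝ} (hab : a < b)
    (hf₁ : Measurable f₁) (hf₂ : Measurable f₂)
    (hbdd₁ : ∀ u ∈ Set.Icc a b, |f₁ u| ≤ C) (hbdd₂ : ∀ u ∈ Set.Icc a b, |f₂ u| ≤ C)
    (p : ℝ) (hp : 1 ≤ p) :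
    (∫⁻ u in Ico a b, ENNReal.ofReal (|Phi a b f₁ u - Phi a b f₂ u| ^ p))
      ≤ ∫⁻ u in Ico a b, ENNReal.ofReal (|f₁ u - f₂ u| ^ p) := by
  rw [grand_key (phi_measurable hab hf₁ hbdd₁) (phi_measurable hab hf₂ hbdd₂) a b p hp,
    grand_key hf₁ hf₂ a b p hp]
  apply lintegral_mono
  intro s
  exact add_le_add (Hs_lemma hab hf₁ hf₂ hbdd₁ hbdd₂ p hp s)
    (Hs_lemma hab hf₂ hf₁ hbdd₂ hbdd₁ p hp s)

/-- The monotone rearrangement is an `L^p` contraction: for bounded measurable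
`f₁, f₂` on `J = [a,b]` and `p ≥ 1`,
`∫_J |Φ(f₁) − Φ(f₂)|^p ≤ ∫_J |f₁ − f₂|^p`. -/
theorem rearrangement_Lp_contraction (a b : ℝ) (hab : a ≤ b) (f₁ f₂ : ℝ → ℝ)
    (hf₁ : Measurable f₁) (hf₂ : Measurable f₂)
    (C : ℝ) (hbdd₁ : ∀ u ∈ Set.Icc a b, |f₁ u| ≤ C) (hbdd₂ : ∀ u ∈ Set.Icc a b, |f₂ u| ≤ C)
    (p : ℝ) (hp : 1 ≤ p) :
    ∫ u in Set.Icc a b, |Phi a b f₁ u - Phi a b f₂ u| ^ p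
      ≤ ∫ u in Set.Icc a b, |f₁ u - f₂ u| ^ p := by
  rcases eq_or_lt_of_le hab with rfl | hab'
  · rw [Set.Icc_self, Measure.restrict_eq_zero.mpr Real.volume_singleton]
    simp
  have hC : 0 ≤ C := le_trans (abs_nonneg _) (hbdd₁ a (left_mem_Icc.mpr hab))
  have hP₁ : Measurable (Phi a b f₁) := phi_measurable hab' hf₁ hbdd₁
  have hP₂ : Measurable (Phi a b f₂) := phi_measurable hab' hf₂ hbdd₂
  have hMF : Measurable fun u => |Phi a b f₁ u - Phi a b f₂ u| ^ p :=
    ((hP₁.sub hP₂).abs).pow measurable_const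
  have hMG : Measurable fun u => |f₁ u - f₂ u| ^ p :=
    ((hf₁.sub hf₂).abs).pow measurable_const
  have hnnF : 0 ≤ᵐ[volume.restrict (Icc a b)] fun u => |Phi a b f₁ u - Phi a b f₂ u| ^ p :=
    Filter.Eventually.of_forall fun u => Real.rpow_nonneg (abs_nonneg _) p
  have hnnG : 0 ≤ᵐ[volume.restrict (Icc a b)] fun u => |f₁ u - f₂ u| ^ p :=
    Filter.Eventually.of_forall fun u => Real.rpow_nonneg (abs_nonneg _) p
  rw [integral_eq_lintegral_of_nonneg_ae hnnF hMF.aestronglyMeasurable,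
    integral_eq_lintegral_of_nonneg_ae hnnG hMG.aestronglyMeasurable]
  have hfin : (∫⁻ u in Icc a b, ENNReal.ofReal (|f₁ u - f₂ u| ^ p)) ≠ ⊤ := by
    have hle : (∫⁻ u in Icc a b, ENNReal.ofReal (|f₁ u - f₂ u| ^ p))
        ≤ ∫⁻ _ in Icc a b, ENNReal.ofReal ((2 * C) ^ p) := by
      apply setLIntegral_mono measurable_const
      intro u hu
      apply ENNReal.ofReal_le_ofReal
      apply Real.rpow_le_rpow (abs_nonneg _) _ (by linarith)
      calc |f₁ u - f₂ u| ≤ |f₁ u| + |f₂ u| := abs_sub _ _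
        _ ≤ 2 * C := by linarith [hbdd₁ u hu, hbdd₂ u hu]
    refine ne_top_of_le_ne_top ?_ hle
    rw [setLIntegral_const]
    exact ENNReal.mul_ne_top ENNReal.ofReal_ne_top measure_Icc_lt_top.ne
  apply ENNReal.toReal_mono hfin
  have hres : volume.restrict (Icc a b) = volume.restrict (Ico a b) :=
    (Measure.restrict_congr_set Ico_ae_eq_Icc).symm
  rw [hres]
  exact grand_ineq hab' hf₁ hf₂ hbdd₁ hbdd₂ p hp
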